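/- Let F be a field and D a finite Galois extension of F with solvable Galois group. Suppose E and E' are intermediate fields of D over F, each of which is a primitive extension of F (the only intermediate fields between F and E, respectively between F and E', are the trivial ones) and each of which has D as its Galois closure over F. Then E and E' are conjugate: there exists σ ∈ Gal(D|F) with σ(E) = E'. In particular, a solvable primitive extension of F is determined up to F-isomorphism by its Galois closure over F. -/

import Mathlib

open Pointwise
open scoped commutatorElement

section GroupAux

variable {G : Type*} [Group G]

/-- A subgroup centralized by `N` and normalized by `B` with `N ⊔ B = ⊤` is normal. -/
lemma auxNormal (N B A : Subgroup G)
    (hcent : A ≤ Subgroup.centralizer (N : Set G))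
    (hB : B ≤ Subgroup.normalizer (A : Set G)) (hsup : N ⊔ B = ⊤) : A.Normal := by
  rw [← Subgroup.normalizer_eq_top_iff, ← top_le_iff, ← hsup, sup_le_iff]
  refine ⟨fun n hn => ?_, hB⟩
  rw [Subgroup.mem_normalizer_iff]
  intro x
  constructor
  · intro hx
    have h := Subgroup.mem_centralizer_iff.mp (hcent hx) n hn
    have : n * x * n⁻¹ = x := by rw [h, mul_inv_cancel_right]
    rwa [this]
  · intro hy
    have h := Subgroup.mem_centralizer_iff.mp (hcent hy) n hn
    have e1 : x = n⁻¹ * (n * x * n⁻¹ * n) := by group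
    rw [← h] at e1
    simp only [← mul_assoc, inv_mul_cancel, one_mul] at e1
    rwa [e1]

lemma le_normalizer_inf {N : Subgroup G} (hN : N.Normal) (J : Subgroup G) :
    J ≤ Subgroup.normalizer ((N ⊓ J : Subgroup G) : Set G) := by
  intro j hj
  rw [Subgroup.mem_normalizer_iff]
  intro x
  constructor
  · intro hx
    obtain ⟨h1, h2⟩ := Subgroup.mem_inf.mp hx
    exact Subgroup.mem_inf.mpr ⟨hN.conj_mem x h1 j,
      J.mul_mem (J.mul_mem hj h2) (J.inv_mem hj)⟩
  · intro hx
    obtain ⟨h1, h2⟩ := Subgroup.mem_inf.mp hx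
    have e : x = j⁻¹ * (j * x * j⁻¹) * j := by group
    rw [e]
    exact Subgroup.mem_inf.mpr ⟨by simpa using hN.conj_mem _ h1 j⁻¹,
      J.mul_mem (J.mul_mem (J.inv_mem hj) h2) hj⟩

lemma centralizerNormal (N : Subgroup G) (hN : N.Normal) :
    (Subgroup.centralizer (N : Set G)).Normal := by
  constructor
  intro c hc g
  rw [Subgroup.mem_centralizer_iff]
  intro n hn
  have h := Subgroup.mem_centralizer_iff.mp hc (g⁻¹ * n * g) (by simpa using hN.conj_mem n hn g⁻¹)
  calc n * (g * c * g⁻¹) = g * ((g⁻¹ * n * g) * c) * g⁻¹ := by group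
    _ = g * (c * (g⁻¹ * n * g)) * g⁻¹ := by rw [h]
    _ = g * c * g⁻¹ * n := by group

/-- Existence of an elementary abelian minimal normal subgroup in a
nontrivial finite solvable group. -/
lemma existsMinNormal [Finite G] [Nontrivial G] [Group.IsSolvable G] :
    ∃ (N : Subgroup G) (p : ℕ), N.Normal ∧ N ≠ ⊥ ∧
      (∀ N' : Subgroup G, N'.Normal → N' ≤ N → N' = ⊥ ∨ N' = N) ∧
      (∀ a ∈ N, ∀ b ∈ N, a * b = b * a) ∧ p.Prime ∧ (∀ x ∈ N, x ^ p = 1) := by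
  have hfin : Finite (Subgroup G) :=
    Finite.of_injective (fun H : Subgroup G => (H : Set G)) SetLike.coe_injective
  set s : Set (Subgroup G) := {N | N.Normal ∧ N ≠ ⊥} with hs
  have htb : (⊤ : Subgroup G) ≠ ⊥ := by
    obtain ⟨x, hx⟩ := exists_ne (1 : G)
    intro h
    exact hx (Subgroup.mem_bot.mp (h ▸ Subgroup.mem_top x))
  have hne : s.Nonempty := ⟨⊤, ⟨inferInstance, htb⟩⟩
  obtain ⟨N, hNs, hNmin1⟩ := (Set.toFinite s).exists_minimal hne
  have hNmin0 : ∀ N' ∈ s, N' ≤ N → N = N' := fun N' h h2 => le_antisymm (hNmin1 h h2) h2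
  obtain ⟨hNnorm, hNbot⟩ := hNs
  have hNmin : ∀ N' : Subgroup G, N'.Normal → N' ≤ N → N' = ⊥ ∨ N' = N := by
    intro N' h1 h2
    by_cases hb : N' = ⊥
    · exact Or.inl hb
    · exact Or.inr ((hNmin0 N' ⟨h1, hb⟩ h2).symm)
  haveI := hNnorm
  -- abelian
  have hCN : ⁅N, N⁆ ≤ N := Subgroup.commutator_le_right N N
  have habel : ∀ a ∈ N, ∀ b ∈ N, a * b = b * a := by
    rcases hNmin ⁅N, N⁆ inferInstance hCN with hC | hC
    · intro a ha b hb
      have : ⁅a, b⁆ ∈ (⊥ : Subgroup G) := hC ▸ Subgroup.commutator_mem_commutator ha hb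
      rw [Subgroup.mem_bot] at this
      exact commutatorElement_eq_one_iff_mul_comm.mp this
    · exfalso
      have key : ∀ n : ℕ, N ≤ derivedSeries G n := by
        intro n
        induction n with
        | zero => exact le_top
        | succ n ih =>
          rw [derivedSeries_succ]
          calc N = ⁅N, N⁆ := hC.symm
            _ ≤ ⁅derivedSeries G n, derivedSeries G n⁆ := Subgroup.commutator_mono ih ih
      obtain ⟨n, hn⟩ := Group.IsSolvable.solvable (G := G)
      exact hNbot (le_bot_iff.mp (hn ▸ key n))
  -- prime
  haveI : Nontrivial ↥N := (Subgroup.nontrivial_iff_ne_bot N).mpr hNbot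
  obtain ⟨p, hp, hpd⟩ := Nat.exists_prime_and_dvd (Finite.one_lt_card (α := ↥N)).ne'
  haveI := Fact.mk hp
  obtain ⟨x, hx⟩ := exists_prime_orderOf_dvd_card' (G := ↥N) p hpd
  refine ⟨N, p, hNnorm, hNbot, hNmin, habel, hp, ?_⟩
  set P : Subgroup G :=
    { carrier := {g : G | g ∈ N ∧ g ^ p = 1}
      one_mem' := ⟨N.one_mem, one_pow p⟩
      mul_mem' := by
        rintro a b ⟨haN, hap⟩ ⟨hbN, hbp⟩
        refine ⟨N.mul_mem haN hbN, ?_⟩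
        rw [Commute.mul_pow ((habel a haN b hbN)), hap, hbp, one_mul]
      inv_mem' := by
        rintro a ⟨haN, hap⟩
        exact ⟨N.inv_mem haN, by rw [inv_pow, hap, inv_one]⟩ } with hPdef
  have hPnormal : P.Normal := by
    constructor
    rintro a ⟨haN, hap⟩ g
    refine ⟨hNnorm.conj_mem a haN g, ?_⟩
    rw [conj_pow, hap, mul_one, mul_inv_cancel]
  have hPle : P ≤ N := fun g hg => hg.1
  have hPbot : P ≠ ⊥ := by
    intro h
    have hxP : (x : G) ∈ P := by
      refine ⟨x.2, ?_⟩
      have : (x : ↥N) ^ p = 1 := by rw [← hx]; exact pow_orderOf_eq_one x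
      exact_mod_cast congrArg (Subtype.val) this
    rw [h, Subgroup.mem_bot] at hxP
    have : x = 1 := Subtype.ext hxP
    rw [this, orderOf_one] at hx
    exact hp.one_lt.ne' hx.symm
  rcases hNmin P hPnormal hPle with h | h
  · exact absurd h hPbot
  · intro g hg
    rw [← h] at hg
    exact hg.2

end GroupAux

section GroupAux2

variable {G : Type*} [Group G]

lemma cardEqMul [Finite G] (N Q M : Subgroup G) (hNM : N ≤ M) (hQM : Q ≤ M)
    (hdisj : N ⊓ Q = ⊥)
    (hgen : ∀ m ∈ M, ∃ n ∈ N, ∃ q ∈ Q, n * q = m) :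
    Nat.card ↥M = Nat.card ↥N * Nat.card ↥Q := by
  have hmap : Function.Bijective (fun p : ↥N × ↥Q =>
      (⟨(p.1 : G) * (p.2 : G), M.mul_mem (hNM p.1.2) (hQM p.2.2)⟩ : ↥M)) := by
    constructor
    · rintro ⟨n, q⟩ ⟨n', q'⟩ h
      have h' : (n : G) * q = (n' : G) * q' := congrArg Subtype.val h
      have key : (n' : G)⁻¹ * (n : G) = (q' : G) * (q : G)⁻¹ := by
        have l1 : (n' : G)⁻¹ * (n : G) * (q : G) = (q' : G) := by
          rw [mul_assoc, h', inv_mul_cancel_left]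
        have l2 : (q' : G) * (q : G)⁻¹ * (q : G) = (q' : G) := by
          rw [inv_mul_cancel_right]
        exact mul_right_cancel (l1.trans l2.symm)
      have h1 : (n' : G)⁻¹ * n ∈ N ⊓ Q := by
        refine Subgroup.mem_inf.mpr ⟨N.mul_mem (N.inv_mem n'.2) n.2, ?_⟩
        rw [key]; exact Q.mul_mem q'.2 (Q.inv_mem q.2)
      rw [hdisj, Subgroup.mem_bot] at h1
      have hn : (n : G) = n' := by
        have := congrArg (fun z => (n' : G) * z) h1
        simpa [mul_assoc] using this
      have hq : (q : G) = q' := by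
        have h2 : q' * (q : G)⁻¹ = 1 := key ▸ h1
        have := congrArg (fun z => z * (q : G)) h2
        simpa [mul_assoc] using this.symm
      exact Prod.ext (Subtype.ext hn) (Subtype.ext hq)
    · rintro ⟨m, hm⟩
      obtain ⟨n, hn, q, hq, hnq⟩ := hgen m hm
      exact ⟨(⟨n, hn⟩, ⟨q, hq⟩), Subtype.ext hnq⟩
  calc Nat.card ↥M = Nat.card (↥N × ↥Q) := (Nat.card_congr (Equiv.ofBijective _ hmap)).symm
    _ = Nat.card ↥N * Nat.card ↥Q := Nat.card_prod _ _

end GroupAux2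

section MainGroup

open Subgroup

variable {G : Type*} [Group G]

theorem conj_of_isCoatom_of_normalCore_eq_bot [Finite G] [Group.IsSolvable G]
    {H K : Subgroup G} (hH : IsCoatom H) (hK : IsCoatom K)
    (hHcore : H.normalCore = ⊥) (hKcore : K.normalCore = ⊥) :
    ∃ g : G, MulAut.conj g • H = K := by
  have hfin : Finite (Subgroup G) :=
    Finite.of_injective (fun H : Subgroup G => (H : Set G)) SetLike.coe_injective
  haveI : Nontrivial G := by
    rcases subsingleton_or_nontrivial G with h | h
    · exact absurd (Subsingleton.elim H ⊤) hH.1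
    · exact h
  obtain ⟨N, p, hNnorm, hNbot, hNmin, habel, hp, hpow⟩ := existsMinNormal (G := G)
  haveI := hNnorm
  have hNcent : N ≤ Subgroup.centralizer (N : Set G) := fun a ha =>
    Subgroup.mem_centralizer_iff.mpr fun b hb => habel b hb a ha
  -- complements
  have key : ∀ J : Subgroup G, IsCoatom J → J.normalCore = ⊥ → N ⊔ J = ⊤ ∧ N ⊓ J = ⊥ := by
    intro J hJ hJc
    have hNJ : ¬N ≤ J := by
      intro h
      exact hNbot (le_bot_iff.mp (hJc ▸ Subgroup.normal_le_normalCore.mpr h))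
    have hsup : N ⊔ J = ⊤ := by
      refine hJ.2 _ (lt_of_le_of_ne le_sup_right ?_)
      intro h
      exact hNJ (h ▸ le_sup_left)
    have hA : (N ⊓ J).Normal := auxNormal N J (N ⊓ J)
      (le_trans inf_le_left hNcent) (le_normalizer_inf hNnorm J) hsup
    haveI := hA
    have hinf : N ⊓ J = ⊥ :=
      le_bot_iff.mp (hJc ▸ Subgroup.normal_le_normalCore.mpr inf_le_right)
    exact ⟨hsup, hinf⟩
  obtain ⟨hsupH, hinfH⟩ := key H hH hHcore
  obtain ⟨hsupK, hinfK⟩ := key K hK hKcore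
  -- self-centralizing
  have hcent : Subgroup.centralizer (N : Set G) = N := by
    haveI hCn := centralizerNormal N hNnorm
    have hCH : (Subgroup.centralizer (N : Set G) ⊓ H).Normal :=
      auxNormal N H _ inf_le_left (le_normalizer_inf hCn H) hsupH
    haveI := hCH
    have h0 : Subgroup.centralizer (N : Set G) ⊓ H = ⊥ :=
      le_bot_iff.mp (hHcore ▸ Subgroup.normal_le_normalCore.mpr inf_le_right)
    refine le_antisymm ?_ hNcent
    intro c hc
    have hc' : c ∈ (↑(N ⊔ H) : Set G) := by rw [hsupH]; trivial
    rw [Subgroup.normal_mul] at hc'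
    obtain ⟨n, hn, h, hh, heq⟩ := Set.mem_mul.mp hc'
    have hhC : h ∈ Subgroup.centralizer (N : Set G) ⊓ H := by
      refine Subgroup.mem_inf.mpr ⟨?_, hh⟩
      have : h = n⁻¹ * c := by rw [← heq, ← mul_assoc, inv_mul_cancel, one_mul]
      rw [this]
      exact Subgroup.mul_mem _ (Subgroup.inv_mem _ (hNcent hn)) hc
    rw [h0, Subgroup.mem_bot] at hhC
    rw [← heq, hhC, mul_one]
    exact hn
  by_cases hNtop : N = ⊤
  · -- `G` is abelian
    have hcomm : ∀ a g : G, g * a = a * g := fun a g =>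
      habel g (hNtop ▸ Subgroup.mem_top g) a (hNtop ▸ Subgroup.mem_top a)
    have hHn : H.Normal := ⟨fun a ha g => by rw [hcomm a g, mul_inv_cancel_right]; exact ha⟩
    have hKn : K.Normal := ⟨fun a ha g => by rw [hcomm a g, mul_inv_cancel_right]; exact ha⟩
    haveI := hHn; haveI := hKn
    have h1 : H = ⊥ := by rw [← hHcore, Subgroup.normalCore_eq_self]
    have h2 : K = ⊥ := by rw [← hKcore, Subgroup.normalCore_eq_self]
    refine ⟨1, ?_⟩
    rw [h1, h2, map_one, one_smul]
  · -- main case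
    have hq_setup : ∃ (M : Subgroup G) (q : ℕ), M.Normal ∧ N ≤ M ∧ N ≠ M ∧ q.Prime ∧
        (∀ x ∈ M, x ^ q ∈ N) := by
      haveI : Nontrivial (G ⧸ N) := by
        obtain ⟨g, -, hg⟩ := SetLike.exists_of_lt (lt_top_iff_ne_top.mpr hNtop : N < ⊤)
        refine nontrivial_of_ne ((g : G ⧸ N)) 1 ?_
        simpa [QuotientGroup.eq_one_iff] using hg
      obtain ⟨Mq, q, hMqnorm, hMqbot, _, _, hq, hpowq⟩ := existsMinNormal (G := G ⧸ N)
      refine ⟨Mq.comap (QuotientGroup.mk' N), q, hMqnorm.comap _, ?_, ?_, hq, ?_⟩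
      · intro x hx
        rw [Subgroup.mem_comap]
        have : QuotientGroup.mk' N x = 1 := (QuotientGroup.eq_one_iff x).mpr hx
        rw [this]; exact Mq.one_mem
      · intro hEq
        haveI : Nontrivial ↥Mq := (Subgroup.nontrivial_iff_ne_bot Mq).mpr hMqbot
        obtain ⟨a, ha⟩ := exists_ne (1 : ↥Mq)
        obtain ⟨g, hg⟩ := QuotientGroup.mk'_surjective N (a : G ⧸ N)
        have hgM : g ∈ Mq.comap (QuotientGroup.mk' N) := by
          rw [Subgroup.mem_comap, hg]; exact a.2
        rw [← hEq] at hgM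
        have : (a : G ⧸ N) = 1 := by rw [← hg]; exact (QuotientGroup.eq_one_iff g).mpr hgM
        exact ha (Subtype.ext this)
      · intro x hx
        rw [Subgroup.mem_comap] at hx
        have : QuotientGroup.mk' N (x ^ q) = 1 := by rw [map_pow]; exact hpowq _ hx
        exact (QuotientGroup.eq_one_iff _).mp this
    obtain ⟨M, q, hMnorm, hNM, hNMne, hq, hMq⟩ := hq_setup
    haveI := hMnorm
    haveI := Fact.mk hq
    haveI := Fact.mk hp
    -- q ≠ p
    have hqnep : q ≠ p := by
      intro hqp
      subst hqp
      have hMpg : IsPGroup q ↥M := by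
        intro x
        refine ⟨2, ?_⟩
        have h2 : ((x : G) ^ q) ^ q = 1 := hpow _ (hMq _ x.2)
        apply Subtype.ext
        rw [Subgroup.coe_pow, OneMemClass.coe_one, pow_two, pow_mul]
        exact h2
      letI : MulAction ↥M ↥N :=
        MulAction.compHom _ ((MulAut.conjNormal (H := N)).comp M.subtype)
      have hfix := hMpg.card_modEq_card_fixedPoints (α := ↥N)
      have hpN : q ∣ Nat.card ↥N := by
        haveI : Nontrivial ↥N := (Subgroup.nontrivial_iff_ne_bot N).mpr hNbot
        obtain ⟨y, hy⟩ := exists_ne (1 : ↥N)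
        have h1 : y ^ q = 1 := Subtype.ext (by rw [Subgroup.coe_pow, OneMemClass.coe_one]; exact hpow _ y.2)
        have h2 : orderOf y ∣ q := orderOf_dvd_of_pow_eq_one h1
        have h3 : orderOf y = q := by
          rcases (Nat.Prime.eq_one_or_self_of_dvd hq _ h2) with h | h
          · exact absurd (orderOf_eq_one_iff.mp h) hy
          · exact h
        rw [← h3]; exact orderOf_dvd_natCard y
      have hdvdfix : q ∣ Nat.card (MulAction.fixedPoints ↥M ↥N) :=
        (Nat.modEq_zero_iff_dvd).mp (hfix.symm.trans ((Nat.modEq_zero_iff_dvd).mpr hpN))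
      have h1fix : (1 : ↥N) ∈ MulAction.fixedPoints ↥M ↥N := fun m => by
        rw [MulAction.compHom_smul_def, MonoidHom.comp_apply, MulAut.smul_def, map_one]
      haveI : Nonempty ↥(MulAction.fixedPoints ↥M ↥N) := ⟨⟨1, h1fix⟩⟩
      have hpos : 0 < Nat.card ↥(MulAction.fixedPoints ↥M ↥N) := Nat.card_pos
      have hlt : 1 < Nat.card ↥(MulAction.fixedPoints ↥M ↥N) :=
        lt_of_lt_of_le hq.one_lt (Nat.le_of_dvd hpos hdvdfix)
      haveI := (Finite.one_lt_card_iff_nontrivial (α := ↥(MulAction.fixedPoints ↥M ↥N))).mp hlt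
      obtain ⟨y, hy⟩ := exists_ne (⟨1, h1fix⟩ : ↥(MulAction.fixedPoints ↥M ↥N))
      set c : G := ((y : ↥N) : G) with hc
      have hcne : c ≠ 1 := by
        intro h
        exact hy (Subtype.ext (Subtype.ext h))
      have hcC : c ∈ Subgroup.centralizer (M : Set G) := by
        rw [Subgroup.mem_centralizer_iff]
        intro m hm
        have hf := y.2 ⟨m, hm⟩
        rw [MulAction.compHom_smul_def, MonoidHom.comp_apply, MulAut.smul_def] at hf
        have h2 : m * c * m⁻¹ = c := by
          have := congrArg Subtype.val hf
          rwa [MulAut.conjNormal_apply] at this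
        calc m * c = (m * c * m⁻¹) * m := by group
          _ = c * m := by rw [h2]
      have hC'norm : (N ⊓ Subgroup.centralizer (M : Set G)).Normal := by
        haveI hCM := centralizerNormal M hMnorm
        constructor
        intro a ha g
        obtain ⟨h1, h2⟩ := Subgroup.mem_inf.mp ha
        exact Subgroup.mem_inf.mpr ⟨hNnorm.conj_mem _ h1 g, hCM.conj_mem _ h2 g⟩
      have hC'bot : N ⊓ Subgroup.centralizer (M : Set G) ≠ ⊥ := by
        intro h
        have : c ∈ N ⊓ Subgroup.centralizer (M : Set G) :=
          Subgroup.mem_inf.mpr ⟨(y : ↥N).2, hcC⟩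
        rw [h, Subgroup.mem_bot] at this
        exact hcne this
      rcases hNmin _ hC'norm inf_le_left with h | h
      · exact hC'bot h
      · have hNC : N ≤ Subgroup.centralizer (M : Set G) := by
          intro x hx
          rw [← h] at hx
          exact (Subgroup.mem_inf.mp hx).2
        have hMN : M ≤ N := by
          rw [← hcent]
          intro m hm
          rw [Subgroup.mem_centralizer_iff]
          intro n hn
          exact (Subgroup.mem_centralizer_iff.mp (hNC hn) m hm).symm
        exact hNMne (le_antisymm hNM hMN)
    have hqN : ¬ q ∣ Nat.card ↥N := by
      intro hdvd
      obtain ⟨y, hy⟩ := exists_prime_orderOf_dvd_card' (G := ↥N) q hdvd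
      have h1 : y ^ p = 1 := Subtype.ext
        (by rw [Subgroup.coe_pow, OneMemClass.coe_one]; exact hpow _ y.2)
      have h2 : q ∣ p := hy ▸ orderOf_dvd_of_pow_eq_one h1
      exact hqnep ((Nat.prime_dvd_prime_iff_eq hq hp).mp h2)
    -- the two "complement" subgroups inside M
    set Q : Subgroup G := M ⊓ H with hQdef
    set Q' : Subgroup G := M ⊓ K with hQ'def
    have key2 : ∀ J : Subgroup G, N ⊔ J = ⊤ → N ⊓ J = ⊥ →
        (M = N ⊔ (M ⊓ J)) ∧ (∀ x ∈ M ⊓ J, x ^ q = 1) ∧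
        Nat.card ↥M = Nat.card ↥N * Nat.card ↥(M ⊓ J) := by
      intro J hsup hinf
      have hdec : ∀ m ∈ M, ∃ n ∈ N, ∃ x ∈ M ⊓ J, n * x = m := by
        intro m hm
        have hm' : m ∈ (↑(N ⊔ J) : Set G) := by rw [hsup]; trivial
        rw [Subgroup.normal_mul] at hm'
        obtain ⟨n, hn, j, hj, heq⟩ := Set.mem_mul.mp hm'
        refine ⟨n, hn, j, Subgroup.mem_inf.mpr ⟨?_, hj⟩, heq⟩
        have : j = n⁻¹ * m := by rw [← heq, ← mul_assoc, inv_mul_cancel, one_mul]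
        rw [this]
        exact M.mul_mem (M.inv_mem (hNM hn)) hm
      have hpows : ∀ x ∈ M ⊓ J, x ^ q = 1 := by
        intro x hx
        obtain ⟨h1, h2⟩ := Subgroup.mem_inf.mp hx
        have : x ^ q ∈ N ⊓ J := Subgroup.mem_inf.mpr ⟨hMq x h1, J.pow_mem h2 q⟩
        rwa [hinf, Subgroup.mem_bot] at this
      have hdisj : N ⊓ (M ⊓ J) = ⊥ :=
        le_bot_iff.mp (le_trans (inf_le_inf_left N inf_le_right) hinf.le)
      have hsupM : M = N ⊔ (M ⊓ J) := by
        apply le_antisymm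
        · intro m hm
          obtain ⟨n, hn, x, hxmem, heq⟩ := hdec m hm
          rw [← heq]
          exact Subgroup.mul_mem_sup hn hxmem
        · exact sup_le hNM inf_le_left
      exact ⟨hsupM, hpows, cardEqMul N (M ⊓ J) M hNM inf_le_left hdisj hdec⟩
    obtain ⟨hMQ, hQpow, hMcard⟩ := key2 H hsupH hinfH
    obtain ⟨hMQ', hQ'pow, hMcard'⟩ := key2 K hsupK hinfK
    -- Sylow subgroups of M
    have mkSylow : ∀ R : Subgroup G, R ≤ M → (∀ x ∈ R, x ^ q = 1) →
        Nat.card ↥M = Nat.card ↥N * Nat.card ↥R →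
        ∃ S : Sylow q ↥M, (S : Subgroup ↥M) = R.subgroupOf M := by
      intro R hRM hRpow hcard
      have hRpg : IsPGroup q ↥R := by
        intro x
        refine ⟨1, ?_⟩
        rw [pow_one]
        apply Subtype.ext
        rw [Subgroup.coe_pow, OneMemClass.coe_one]
        exact hRpow _ x.2
      have hpR : IsPGroup q ↥(R.subgroupOf M) := by
        intro x
        refine ⟨1, ?_⟩
        rw [pow_one]
        apply Subtype.ext
        apply Subtype.ext
        rw [Subgroup.coe_pow, Subgroup.coe_pow, OneMemClass.coe_one, OneMemClass.coe_one]
        exact hRpow _ (Subgroup.mem_subgroupOf.mp x.2)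
      obtain ⟨S, hS⟩ := hpR.exists_le_sylow
      have hineq : Nat.card ↥((S : Subgroup ↥M)) ≤ Nat.card ↥(R.subgroupOf M) := by
        have hcardR : Nat.card ↥(R.subgroupOf M) = Nat.card ↥R :=
          Nat.card_congr (Subgroup.subgroupOfEquivOfLe hRM).toEquiv
        obtain ⟨a, ha⟩ := IsPGroup.iff_card.mp hRpg
        have hSpg : IsPGroup q ↥((S : Subgroup ↥M)) := S.2
        obtain ⟨s, hs⟩ := IsPGroup.iff_card.mp hSpg
        have hdvd : Nat.card ↥((S : Subgroup ↥M)) ∣ Nat.card ↥M :=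
          Subgroup.card_subgroup_dvd_card ((S : Subgroup ↥M))
        rw [hs, hcard, ha] at hdvd
        have hcop : Nat.Coprime (q ^ s) (Nat.card ↥N) :=
          Nat.Coprime.pow_left s ((Nat.Prime.coprime_iff_not_dvd hq).mpr hqN)
        have hdvd2 : q ^ s ∣ q ^ a := hcop.dvd_of_dvd_mul_left hdvd
        rw [hs, hcardR, ha]
        exact Nat.le_of_dvd (pow_pos hq.pos a) hdvd2
      exact ⟨S, (Subgroup.eq_of_le_of_card_ge hS hineq).symm⟩
    obtain ⟨SQ, hSQ⟩ := mkSylow Q inf_le_left hQpow hMcard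
    obtain ⟨SQ', hSQ'⟩ := mkSylow Q' inf_le_left hQ'pow hMcard'
    haveI : Finite (Subgroup ↥M) :=
      Finite.of_injective (fun A : Subgroup ↥M => (A : Set ↥M)) SetLike.coe_injective
    haveI : Finite (Sylow q ↥M) :=
      Finite.of_injective (fun S : Sylow q ↥M => (S : Subgroup ↥M)) fun _ _ h => Sylow.ext h
    obtain ⟨m, hm⟩ := MulAction.exists_smul_eq ↥M SQ SQ'
    have key_e : ∀ (x : G) (hxM : x ∈ M),
        ((((MulAut.conj m)⁻¹ • (⟨x, hxM⟩ : ↥M) : ↥M)) : G) = (m : G)⁻¹ * x * m := by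
      intro x hxM
      rw [MulAut.smul_def, MulAut.conj_inv_apply]
      rfl
    have hconj : ∀ x : G, x ∈ Q' ↔ (m : G)⁻¹ * x * (m : G) ∈ Q := by
      intro x
      constructor
      · intro hx
        have hxM : x ∈ M := (Subgroup.mem_inf.mp hx).1
        have h1 : (⟨x, hxM⟩ : ↥M) ∈ (SQ' : Subgroup ↥M) := by
          rw [hSQ']; exact Subgroup.mem_subgroupOf.mpr hx
        rw [← hm, Sylow.coe_subgroup_smul,
          Subgroup.mem_pointwise_smul_iff_inv_smul_mem, hSQ] at h1
        have h2 := Subgroup.mem_subgroupOf.mp h1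
        rwa [key_e x hxM] at h2
      · intro hx
        have hxm : (m : G)⁻¹ * x * m ∈ M := (Subgroup.mem_inf.mp hx).1
        have hxM : x ∈ M := by
          have e : x = (m : G) * ((m : G)⁻¹ * x * m) * (m : G)⁻¹ := by group
          rw [e]
          exact M.mul_mem (M.mul_mem m.2 hxm) (M.inv_mem m.2)
        have h1 : (⟨x, hxM⟩ : ↥M) ∈ (SQ' : Subgroup ↥M) := by
          rw [← hm, Sylow.coe_subgroup_smul,
            Subgroup.mem_pointwise_smul_iff_inv_smul_mem, hSQ]
          apply Subgroup.mem_subgroupOf.mpr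
          rw [key_e x hxM]
          exact hx
        rw [hSQ'] at h1
        exact Subgroup.mem_subgroupOf.mp h1
    -- decompose m = y * n with y ∈ Q', n ∈ N
    obtain ⟨y, hy, n, hn, hyn⟩ : ∃ y ∈ Q', ∃ n ∈ N, y * n = (m : G) := by
      have h1 : ((m : ↥M) : G) ∈ (↑(Q' ⊔ N) : Set G) := by
        rw [sup_comm, ← hMQ']
        exact m.2
      rw [Subgroup.mul_normal] at h1
      exact Set.mem_mul.mp h1
    have hQQ' : ∀ z : G, z ∈ Q' ↔ n⁻¹ * z * n ∈ Q := by
      intro z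
      have h1 : y * z * y⁻¹ ∈ Q' ↔ z ∈ Q' := by
        constructor
        · intro h
          have e : z = y⁻¹ * (y * z * y⁻¹) * y := by group
          rw [e]; exact Q'.mul_mem (Q'.mul_mem (Q'.inv_mem hy) h) hy
        · intro h; exact Q'.mul_mem (Q'.mul_mem hy h) (Q'.inv_mem hy)
      have h2 := hconj (y * z * y⁻¹)
      rw [h1] at h2
      have e : (m : G)⁻¹ * (y * z * y⁻¹) * m = n⁻¹ * z * n := by rw [← hyn]; group
      rw [e] at h2
      exact h2
    set K₁ : Subgroup G := MulAut.conj n⁻¹ • K with hK₁def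
    have hK₁mem : ∀ x : G, x ∈ K₁ ↔ n * x * n⁻¹ ∈ K := by
      intro x
      rw [hK₁def, Subgroup.mem_pointwise_smul_iff_inv_smul_mem, ← map_inv, inv_inv,
        MulAut.smul_def, MulAut.conj_apply]
    have hMK₁ : M ⊓ K₁ = Q := by
      ext x
      constructor
      · intro hx
        obtain ⟨hxM, hxK₁⟩ := Subgroup.mem_inf.mp hx
        have h1 : n * x * n⁻¹ ∈ Q' := Subgroup.mem_inf.mpr
          ⟨hMnorm.conj_mem x hxM n, (hK₁mem x).mp hxK₁⟩
        have h2 := (hQQ' _).mp h1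
        have e : n⁻¹ * (n * x * n⁻¹) * n = x := by group
        rwa [e] at h2
      · intro hx
        have hxM : x ∈ M := (Subgroup.mem_inf.mp hx).1
        refine Subgroup.mem_inf.mpr ⟨hxM, (hK₁mem x).mpr ?_⟩
        have h1 : n * x * n⁻¹ ∈ Q' := by
          apply (hQQ' (n * x * n⁻¹)).mpr
          have e : n⁻¹ * (n * x * n⁻¹) * n = x := by group
          rwa [e]
        exact (Subgroup.mem_inf.mp h1).2
    -- Frattini argument
    have hfr : Subgroup.normalizer (Q : Set G) ⊔ M = ⊤ := by
      have h := Sylow.normalizer_sup_eq_top (G := G) (N := M) SQ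
      rwa [hSQ, Subgroup.subgroupOf_map_subtype, inf_of_le_left inf_le_left] at h
    set L := Subgroup.normalizer (Q : Set G) with hLdef
    have hHL : H ≤ L := le_normalizer_inf hMnorm H
    have hK₁L : K₁ ≤ L := by
      have h := le_normalizer_inf hMnorm K₁
      rwa [hMK₁] at h
    have hQL : Q ≤ L := Subgroup.le_normalizer
    have hNsupL : N ⊔ L = ⊤ := by
      rw [← hfr, hMQ, sup_comm L (N ⊔ Q), sup_assoc, sup_eq_right.mpr hQL]
    have hLN : (N ⊓ L).Normal :=
      auxNormal N L (N ⊓ L) (le_trans inf_le_left hNcent) (le_normalizer_inf hNnorm L) hNsupL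
    rcases hNmin (N ⊓ L) hLN inf_le_left with hbot | htop
    · -- final computation
      have hcard_top : ∀ J : Subgroup G, N ⊔ J = ⊤ → N ⊓ J = ⊥ →
          Nat.card ↥(⊤ : Subgroup G) = Nat.card ↥N * Nat.card ↥J := by
        intro J hsup hinf
        apply cardEqMul N J ⊤ le_top le_top hinf
        intro g _
        have hg : g ∈ (↑(N ⊔ J) : Set G) := by rw [hsup]; trivial
        rw [Subgroup.normal_mul] at hg
        obtain ⟨a, ha, b, hb, heq⟩ := Set.mem_mul.mp hg
        exact ⟨a, ha, b, hb, heq⟩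
      have hcardL := hcard_top L hNsupL hbot
      have hcardH := hcard_top H hsupH hinfH
      have hcardK := hcard_top K hsupK hinfK
      have hNpos : 0 < Nat.card ↥N := Nat.card_pos
      have hHL_eq : H = L := Subgroup.eq_of_le_of_card_ge hHL
        (le_of_eq (Nat.eq_of_mul_eq_mul_left hNpos (hcardL.symm.trans hcardH)))
      have hcardK₁ : Nat.card ↥K₁ = Nat.card ↥K := by
        rw [hK₁def]
        exact (Nat.card_congr (Subgroup.equivSMul (MulAut.conj n⁻¹) K).toEquiv).symm
      have hK₁L_eq : K₁ = L := by
        apply Subgroup.eq_of_le_of_card_ge hK₁L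
        have hLK : Nat.card ↥L = Nat.card ↥K :=
          Nat.eq_of_mul_eq_mul_left hNpos (hcardL.symm.trans hcardK)
        rw [hcardK₁, hLK]
      have hfinal : K₁ = H := hK₁L_eq.trans hHL_eq.symm
      refine ⟨n, ?_⟩
      rw [← hfinal, hK₁def, smul_smul, ← map_mul, mul_inv_cancel, map_one, one_smul]
    · -- contradiction branch
      exfalso
      have hNL : N ≤ L := by
        intro x hx
        have hx' : x ∈ N ⊓ L := by rw [htop]; exact hx
        exact (Subgroup.mem_inf.mp hx').2
      have hQnorm : Q.Normal := by
        rw [← Subgroup.normalizer_eq_top_iff, ← top_le_iff, ← hsupH]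
        exact sup_le hNL hHL
      haveI := hQnorm
      have hcomm : ⁅Q, N⁆ ≤ Q ⊓ N :=
        le_inf (Subgroup.commutator_le_left Q N) (Subgroup.commutator_le_right Q N)
      have hQN : Q ⊓ N = ⊥ := le_bot_iff.mp (by
        calc Q ⊓ N ≤ H ⊓ N := inf_le_inf_right N inf_le_right
          _ = ⊥ := by rw [inf_comm]; exact hinfH)
      have hQcent : Q ≤ Subgroup.centralizer (N : Set G) := by
        rw [← Subgroup.commutator_eq_bot_iff_le_centralizer]
        exact le_bot_iff.mp (hQN ▸ hcomm)
      rw [hcent] at hQcent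
      have hQbot : Q = ⊥ := le_bot_iff.mp (by
        calc Q ≤ N ⊓ H := le_inf hQcent inf_le_right
          _ = ⊥ := hinfH)
      rw [hQdef] at hQbot
      rw [hQbot] at hMcard
      have hMN_card : Nat.card ↥M = Nat.card ↥N := by
        rw [hMcard, Subgroup.card_bot, mul_one]
      exact hNMne (Subgroup.eq_of_le_of_card_ge hNM hMN_card.le)

end MainGroup

section FieldPart

open IntermediateField

theorem stmt10 {F D : Type*} [Field F] [Field D] [Algebra F D]
    [FiniteDimensional F D] [IsGalois F D] (hsolv : IsSolvable (D ≃ₐ[F] D))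
    (E E' : IntermediateField F D)
    (hE : 1 < Module.finrank F E) (hE' : 1 < Module.finrank F E')
    (hprimE : ∀ K : IntermediateField F D, K ≤ E → K = ⊥ ∨ K = E)
    (hprimE' : ∀ K : IntermediateField F D, K ≤ E' → K = ⊥ ∨ K = E')
    (hclosE : normalClosure F E D = ⊤) (hclosE' : normalClosure F E' D = ⊤) :
    ∃ σ : D ≃ₐ[F] D, E.map σ.toAlgHom = E' := by
  haveI : Group.IsSolvable (D ≃ₐ[F] D) := hsolv
  -- coatom property
  have coatom : ∀ E₀ : IntermediateField F D, 1 < Module.finrank F E₀ →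
      (∀ K : IntermediateField F D, K ≤ E₀ → K = ⊥ ∨ K = E₀) →
      IsCoatom E₀.fixingSubgroup := by
    intro E₀ hrank hprim
    have hE₀bot : E₀ ≠ ⊥ := by
      intro h
      rw [h, IntermediateField.finrank_bot] at hrank
      exact lt_irrefl 1 hrank
    constructor
    · intro h
      apply hE₀bot
      have := congrArg IntermediateField.fixedField
        (h.trans (IntermediateField.fixingSubgroup_bot (F := F) (E := D)).symm)
      rwa [IsGalois.fixedField_fixingSubgroup, IsGalois.fixedField_fixingSubgroup] at this
    · intro J hHJ
      have h1 : IntermediateField.fixedField J ≤ E₀ := by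
        rw [← IsGalois.fixedField_fixingSubgroup E₀, IntermediateField.le_iff_le,
          IntermediateField.fixingSubgroup_fixedField J]
        exact hHJ.le
      rcases hprim _ h1 with hbot | heq
      · have := congrArg IntermediateField.fixingSubgroup hbot
        rwa [IntermediateField.fixingSubgroup_fixedField,
          IntermediateField.fixingSubgroup_bot] at this
      · exfalso
        have := congrArg IntermediateField.fixingSubgroup heq
        rw [IntermediateField.fixingSubgroup_fixedField] at this
        rw [this] at hHJ
        exact lt_irrefl _ hHJ
  -- trivial normal core property
  have corebot : ∀ E₀ : IntermediateField F D, normalClosure F E₀ D = ⊤ →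
      E₀.fixingSubgroup.normalCore = ⊥ := by
    intro E₀ hclos
    have h1 : (⊤ : IntermediateField F D) ≤
        IntermediateField.fixedField E₀.fixingSubgroup.normalCore := by
      rw [← hclos, normalClosure_le_iff]
      intro f
      set σ : D ≃ₐ[F] D :=
        AlgEquiv.ofBijective (f.liftNormal D) (AlgHom.normal_bijective F D D _) with hσdef
      have comm : ∀ y : ↥E₀, σ (algebraMap ↥E₀ D y) = f y := by
        intro y
        have := AlgHom.liftNormal_commutes f D y
        rw [hσdef]
        simpa using this
      have hrange : f.fieldRange = E₀.map (σ : D →ₐ[F] D) := by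
        ext x
        rw [AlgHom.mem_fieldRange, ← SetLike.mem_coe, IntermediateField.coe_map,
          Set.mem_image]
        constructor
        · rintro ⟨y, rfl⟩
          exact ⟨↑y, y.2, comm y⟩
        · rintro ⟨z, hz, rfl⟩
          exact ⟨⟨z, hz⟩, (comm ⟨z, hz⟩).symm⟩

      rw [hrange, IntermediateField.le_iff_le, IsGalois.map_fixingSubgroup]
      intro x hx
      rw [Subgroup.mem_pointwise_smul_iff_inv_smul_mem]
      have e : (MulAut.conj σ)⁻¹ • x = σ⁻¹ * x * σ := by
        rw [← map_inv, MulAut.smul_def, MulAut.conj_apply, inv_inv]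
      rw [e]
      refine E₀.fixingSubgroup.normalCore_le ?_
      have := (Subgroup.normalCore_normal E₀.fixingSubgroup).conj_mem x hx σ⁻¹
      simpa using this
    have h2 := (IntermediateField.le_iff_le _ _).mp h1
    rw [IntermediateField.fixingSubgroup_top] at h2
    exact le_bot_iff.mp h2
  obtain ⟨σ, hσ⟩ := conj_of_isCoatom_of_normalCore_eq_bot
    (coatom E hE hprimE) (coatom E' hE' hprimE')
    (corebot E hclosE) (corebot E' hclosE')
  refine ⟨σ, ?_⟩
  have h := IsGalois.map_fixingSubgroup E σ
  rw [hσ] at h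
  have h2 := congrArg IntermediateField.fixedField h
  rwa [IsGalois.fixedField_fixingSubgroup, IsGalois.fixedField_fixingSubgroup] at h2

end FieldPart
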